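/- Let q be a complex number with |q| < 1. Then Σ_{i,j≥0} q^(4i²+2ij−2i+j(j+1)/2) / ((q;q)_{2i} · (q;q)_j) = (−q;q)_∞ · (−q²;q²)_∞. -/

import Mathlib

/-- Finite q-Pochhammer symbol `(a; q)_n = ∏_{k=0}^{n-1} (1 - a q^k)`. -/
noncomputable def qPoch (a q : ℂ) (n : ℕ) : ℂ := ∏ k ∈ Finset.range n, (1 - a * q ^ k)

/-- Infinite q-Pochhammer symbol `(a; q)_∞ = ∏_{k=0}^{∞} (1 - a q^k)`. -/
noncomputable def qPochInf (a q : ℂ) : ℂ := ∏' k : ℕ, (1 - a * q ^ k)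

open Finset Filter Topology

lemma s16_factor_ne {q : ℂ} (hq : ‖q‖ < 1) (k : ℕ) : (1 : ℂ) - q * q ^ k ≠ 0 := by
  intro h
  have h1 : q * q ^ k = 1 := by linear_combination -h
  have : ‖q * q ^ k‖ < 1 := by
    calc ‖q * q ^ k‖ = ‖q‖ * ‖q‖ ^ k := by rw [norm_mul, norm_pow]
    _ ≤ ‖q‖ * 1 := by
        exact mul_le_mul_of_nonneg_left (pow_le_one₀ (norm_nonneg q) hq.le) (norm_nonneg q)
    _ < 1 := by simpa using hq
  rw [h1] at this; simp at this

lemma qPoch_ne_zero {q : ℂ} (hq : ‖q‖ < 1) (n : ℕ) : qPoch q q n ≠ 0 :=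
  Finset.prod_ne_zero_iff.2 fun k _ => s16_factor_ne hq k

lemma s16_summable_log {r : ℝ} (h0 : 0 ≤ r) (h1 : r < 1) :
    Summable (fun k : ℕ => Real.log (1 - r ^ (k + 1))) := by
  have hrk : ∀ k : ℕ, r ^ (k + 1) ≤ r := fun k =>
    pow_le_of_le_one h0 h1.le (Nat.succ_ne_zero k)
  have hpos : ∀ k : ℕ, 0 < 1 - r ^ (k + 1) := fun k => by
    have := hrk k; linarith
  apply Summable.of_norm_bounded (g := fun k => (1 - r)⁻¹ * r ^ (k + 1))
  · exact (summable_geometric_of_lt_one h0 h1).mul_left _ |>.comp_injective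
      (add_left_injective 1)
  · intro k
    have hle : -Real.log (1 - r ^ (k + 1)) ≤ (1 - r)⁻¹ * r ^ (k + 1) := by
      rw [← Real.log_inv]
      have h2 : Real.log (1 - r ^ (k + 1))⁻¹ ≤ (1 - r ^ (k + 1))⁻¹ - 1 :=
        Real.log_le_sub_one_of_pos (inv_pos.2 (hpos k))
      have h3 : (1 - r ^ (k + 1))⁻¹ - 1 = r ^ (k + 1) / (1 - r ^ (k + 1)) := by
        field_simp [ne_of_gt (hpos k)]
        ring
      have h4 : r ^ (k + 1) / (1 - r ^ (k + 1)) ≤ r ^ (k + 1) / (1 - r) := by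
        apply div_le_div_of_nonneg_left (by positivity) (by linarith) (by nlinarith [hrk k])
      rw [h3] at h2
      calc Real.log (1 - r ^ (k+1))⁻¹ ≤ r ^ (k+1) / (1 - r ^ (k+1)) := h2
        _ ≤ r ^ (k+1) / (1-r) := h4
        _ = (1-r)⁻¹ * r ^ (k+1) := by ring
    have hln : Real.log (1 - r ^ (k + 1)) ≤ 0 :=
      Real.log_nonpos (le_of_lt (hpos k)) (by nlinarith [pow_nonneg h0 (k+1)])
    rw [Real.norm_eq_abs, abs_of_nonpos hln]
    exact hle

/-- lower bound constant -/
noncomputable def s16c (r : ℝ) : ℝ := Real.exp (∑' k : ℕ, Real.log (1 - r ^ (k + 1)))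

lemma s16c_pos (r : ℝ) : 0 < s16c r := Real.exp_pos _

lemma s16c_le_prod {r : ℝ} (h0 : 0 ≤ r) (h1 : r < 1) (n : ℕ) :
    s16c r ≤ ∏ k ∈ range n, (1 - r ^ (k + 1)) := by
  have hs := s16_summable_log h0 h1
  have hrk : ∀ k : ℕ, r ^ (k + 1) ≤ r := fun k =>
    pow_le_of_le_one h0 h1.le (Nat.succ_ne_zero k)
  have hpos : ∀ k : ℕ, 0 < 1 - r ^ (k + 1) := fun k => by have := hrk k; linarith
  have key : (∑' k : ℕ, Real.log (1 - r ^ (k + 1))) ≤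
      ∑ k ∈ range n, Real.log (1 - r ^ (k + 1)) := by
    rw [← Summable.sum_add_tsum_nat_add n hs]
    have : (∑' k : ℕ, Real.log (1 - r ^ (k + n + 1))) ≤ 0 :=
      tsum_nonpos fun k => Real.log_nonpos
        (le_of_lt (by have := hrk (k + n); nlinarith [pow_nonneg h0 (k+n+1),
          pow_le_pow_of_le_one h0 h1.le (by omega : k + 1 ≤ k + n + 1)]))
        (by nlinarith [pow_nonneg h0 (k + n + 1)])
    linarith
  calc s16c r ≤ Real.exp (∑ k ∈ range n, Real.log (1 - r ^ (k + 1))) :=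
        Real.exp_le_exp.2 key
    _ = ∏ k ∈ range n, (1 - r ^ (k + 1)) := by
        rw [Real.exp_sum]
        exact Finset.prod_congr rfl fun k _ => Real.exp_log (hpos k)

lemma s16c_le_norm_qPoch {q : ℂ} (hq : ‖q‖ < 1) (n : ℕ) :
    s16c ‖q‖ ≤ ‖qPoch q q n‖ := by
  refine (s16c_le_prod (norm_nonneg q) hq n).trans ?_
  rw [qPoch, norm_prod]
  apply Finset.prod_le_prod
  · intro k _
    have : ‖q‖ ^ (k+1) ≤ ‖q‖ := pow_le_of_le_one (norm_nonneg q) hq.le (Nat.succ_ne_zero k)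
    linarith
  · intro k _
    calc 1 - ‖q‖ ^ (k + 1) = 1 - ‖q * q ^ k‖ := by rw [norm_mul, norm_pow, pow_succ']
      _ ≤ ‖1 - q * q ^ k‖ := by
          have := norm_sub_norm_le (1 : ℂ) (q * q ^ k); simpa using this

lemma s16_norm_qPoch_le {q : ℂ} (hq : ‖q‖ < 1) (n : ℕ) :
    ‖qPoch q q n‖ ≤ Real.exp ((1 - ‖q‖)⁻¹) := by
  rw [qPoch, norm_prod]
  calc ∏ k ∈ range n, ‖1 - q * q ^ k‖ ≤ ∏ k ∈ range n, Real.exp (‖q‖ ^ (k+1)) := by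
        apply Finset.prod_le_prod (fun k _ => norm_nonneg _)
        intro k _
        calc ‖1 - q * q ^ k‖ ≤ ‖(1:ℂ)‖ + ‖q * q ^ k‖ := norm_sub_le _ _
          _ = 1 + ‖q‖ ^ (k+1) := by rw [norm_one, norm_mul, norm_pow, pow_succ']
          _ ≤ Real.exp (‖q‖ ^ (k+1)) := by
              have := Real.add_one_le_exp (‖q‖ ^ (k+1)); linarith
    _ = Real.exp (∑ k ∈ range n, ‖q‖ ^ (k+1)) := (Real.exp_sum _ _).symm
    _ ≤ Real.exp ((1 - ‖q‖)⁻¹) := by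
        apply Real.exp_le_exp.2
        have hsum : Summable (fun k : ℕ => ‖q‖ ^ (k+1)) :=
          (summable_geometric_of_lt_one (norm_nonneg q) hq).comp_injective (add_left_injective 1)
        calc ∑ k ∈ range n, ‖q‖ ^ (k+1) ≤ ∑' k : ℕ, ‖q‖ ^ (k+1) :=
              Summable.sum_le_tsum _ (fun k _ => by positivity) hsum
          _ ≤ ∑' k : ℕ, ‖q‖ ^ k := by
              apply Summable.tsum_le_tsum _ hsum (summable_geometric_of_lt_one (norm_nonneg q) hq)
              intro k
              exact pow_le_pow_of_le_one (norm_nonneg q) hq.le (Nat.le_succ k)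
          _ = (1 - ‖q‖)⁻¹ := tsum_geometric_of_lt_one (norm_nonneg q) hq

lemma s16_hasProd_zero {f : ℕ → ℂ} {k₀ : ℕ} (h : f k₀ = 0) : HasProd f 0 := by
  rw [HasProd]
  have : ∀ᶠ s : Finset ℕ in atTop, ∏ i ∈ s, f i = 0 := by
    filter_upwards [Filter.eventually_ge_atTop {k₀}] with s hs
    exact Finset.prod_eq_zero (hs (Finset.mem_singleton_self k₀)) h
  exact tendsto_const_nhds.congr' (this.mono fun s hs => hs.symm)

lemma s16_multipliable {q : ℂ} (hq : ‖q‖ < 1) (a : ℂ) :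
    Multipliable (fun k : ℕ => 1 - a * q ^ k) := by
  by_cases hz : ∃ k, (1:ℂ) - a * q ^ k = 0
  · obtain ⟨k₀, hk₀⟩ := hz
    exact ⟨0, s16_hasProd_zero hk₀⟩
  push_neg at hz
  apply Complex.multipliable_of_summable_log
  -- summable logs
  obtain ⟨N, hN⟩ : ∃ N : ℕ, ‖a‖ * ‖q‖ ^ N ≤ 1/2 := by
    rcases eq_or_lt_of_le (norm_nonneg q) with h | h
    · exact ⟨1, by rw [← h]; simp⟩
    · have : Tendsto (fun n : ℕ => ‖a‖ * ‖q‖ ^ n) atTop (𝓝 (‖a‖ * 0)) :=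
        (tendsto_pow_atTop_nhds_zero_of_lt_one (norm_nonneg q) hq).const_mul _
      rw [mul_zero] at this
      have := this.eventually_le_const (by norm_num : (0:ℝ) < 1/2)
      exact this.exists
  rw [← summable_nat_add_iff N]
  apply Summable.of_norm_bounded (g := fun k => 3/2 * (‖a‖ * ‖q‖ ^ N) * ‖q‖ ^ k)
  · exact ((summable_geometric_of_lt_one (norm_nonneg q) hq).mul_left _)
  · intro k
    have hbd : ‖-(a * q ^ (k + N))‖ ≤ 1/2 := by
      rw [norm_neg, norm_mul, norm_pow, pow_add]
      calc ‖a‖ * (‖q‖ ^ k * ‖q‖ ^ N) ≤ ‖a‖ * (1 * ‖q‖ ^ N) := by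
            apply mul_le_mul_of_nonneg_left _ (norm_nonneg a)
            exact mul_le_mul_of_nonneg_right (pow_le_one₀ (norm_nonneg q) hq.le)
              (by positivity)
        _ = ‖a‖ * ‖q‖ ^ N := by ring
        _ ≤ 1/2 := hN
    show ‖Complex.log (1 - a * q ^ (k + N))‖ ≤ _
    have heq : (1 : ℂ) - a * q ^ (k + N) = 1 + -(a * q ^ (k + N)) := by ring
    rw [heq]
    calc ‖Complex.log (1 + -(a * q ^ (k+N)))‖ ≤ 3/2 * ‖-(a * q ^ (k+N))‖ :=
          Complex.norm_log_one_add_half_le_self hbd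
      _ ≤ 3/2 * (‖a‖ * ‖q‖ ^ N) * ‖q‖ ^ k := by
          rw [norm_neg, norm_mul, norm_pow, pow_add]; ring_nf
          nlinarith [norm_nonneg a, pow_nonneg (norm_nonneg q) k, pow_nonneg (norm_nonneg q) N]

lemma s16_summable_ratio {r x : ℝ} (h0 : 0 ≤ r) (h1 : r < 1) (hx : 0 ≤ x) :
    Summable (fun n : ℕ => r ^ n.choose 2 * x ^ n) := by
  apply summable_of_ratio_norm_eventually_le (r := 1/2) (by norm_num)
  have : Tendsto (fun n : ℕ => r ^ n * x) atTop (𝓝 (0 * x)) :=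
    (tendsto_pow_atTop_nhds_zero_of_lt_one h0 h1).mul_const x
  rw [zero_mul] at this
  filter_upwards [this.eventually_le_const (by norm_num : (0:ℝ) < 1/2)] with n hn
  have hch : (n+1).choose 2 = n.choose 2 + n := by
    rw [Nat.choose_succ_succ]; simp [Nat.choose_one_right]; ring
  rw [hch]
  have : r ^ (n.choose 2 + n) * x ^ (n + 1) = (r ^ n * x) * (r ^ n.choose 2 * x ^ n) := by
    ring
  rw [this, Real.norm_eq_abs, Real.norm_eq_abs, abs_mul]
  apply mul_le_mul_of_nonneg_right _ (abs_nonneg _)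
  rw [abs_of_nonneg (by positivity)]
  exact hn

/-- Gaussian binomial coefficient -/
noncomputable def s16C (q : ℂ) (N j : ℕ) : ℂ :=
  if j ≤ N then qPoch q q N / (qPoch q q j * qPoch q q (N - j)) else 0

lemma qPoch_succ (a q : ℂ) (n : ℕ) :
    qPoch a q (n + 1) = qPoch a q n * (1 - a * q ^ n) := Finset.prod_range_succ _ _

lemma s16C_self (q : ℂ) (hq : ‖q‖ < 1) (N : ℕ) : s16C q N N = 1 := by
  rw [s16C, if_pos le_rfl, Nat.sub_self]
  have h0 : qPoch q q 0 = 1 := rfl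
  rw [h0, mul_one, div_self (qPoch_ne_zero hq N)]

lemma s16C_zero (q : ℂ) (hq : ‖q‖ < 1) (N : ℕ) : s16C q N 0 = 1 := by
  rw [s16C, if_pos (Nat.zero_le N), Nat.sub_zero]
  have h0 : qPoch q q 0 = 1 := rfl
  rw [h0, one_mul, div_self (qPoch_ne_zero hq N)]

lemma s16C_pascal (q : ℂ) (hq : ‖q‖ < 1) (N i : ℕ) (hi : i ≤ N) :
    s16C q (N + 1) (i + 1) = s16C q N (i + 1) + q ^ (N - i) * s16C q N i := by
  rcases eq_or_lt_of_le hi with rfl | hlt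
  · rw [s16C_self q hq, Nat.sub_self, pow_zero, one_mul, s16C_self q hq, s16C,
      if_neg (by omega)]
    ring
  · have hi1 : i + 1 ≤ N := hlt
    obtain ⟨m, hm⟩ : ∃ m, N = i + 1 + m := ⟨N - (i+1), by omega⟩
    subst hm
    rw [s16C, if_pos (by omega), s16C, if_pos (by omega), s16C, if_pos (by omega)]
    have e1 : i + 1 + m + 1 - (i + 1) = m + 1 := by omega
    have e2 : i + 1 + m - (i + 1) = m := by omega
    have e3 : i + 1 + m - i = m + 1 := by omega
    rw [e1, e2, e3]
    have hP : ∀ n, qPoch q q n ≠ 0 := qPoch_ne_zero hq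
    rw [qPoch_succ q q (i + 1 + m), qPoch_succ q q m, qPoch_succ q q i]
    have hf := s16_factor_ne hq
    rw [mul_div_assoc' (q ^ (m+1)), div_add_div _ _
      (mul_ne_zero (mul_ne_zero (hP i) (hf i)) (hP m))
      (mul_ne_zero (hP i) (mul_ne_zero (hP m) (hf m))),
      div_eq_div_iff
      (mul_ne_zero (mul_ne_zero (hP i) (hf i)) (mul_ne_zero (hP m) (hf m)))
      (mul_ne_zero (mul_ne_zero (mul_ne_zero (hP i) (hf i)) (hP m))
        (mul_ne_zero (hP i) (mul_ne_zero (hP m) (hf m))))]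
    ring

lemma s16_qbinom (q : ℂ) (hq : ‖q‖ < 1) (x : ℂ) (N : ℕ) :
    ∏ k ∈ range N, (1 + x * q ^ k) =
      ∑ j ∈ range (N + 1), q ^ j.choose 2 * s16C q N j * x ^ j := by
  induction N with
  | zero => simp [s16C_zero q hq 0]
  | succ N ih =>
    rw [Finset.prod_range_succ, ih]
    have key : ∀ i ∈ range (N + 1),
        q ^ (i+1).choose 2 * s16C q (N+1) (i+1) * x ^ (i+1) =
        q ^ (i+1).choose 2 * s16C q N (i+1) * x ^ (i+1) +
          (x * q ^ N) * (q ^ i.choose 2 * s16C q N i * x ^ i) := by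
      intro i hi
      have hiN : i ≤ N := by simpa using Nat.lt_succ_iff.1 (mem_range.1 hi)
      rw [s16C_pascal q hq N i hiN]
      have hch : (i+1).choose 2 = i.choose 2 + i := by
        rw [Nat.choose_succ_succ]; simp [Nat.choose_one_right]; ring
      have hexp : q ^ (i+1).choose 2 * q ^ (N - i) = q ^ i.choose 2 * q ^ N := by
        rw [← pow_add, ← pow_add, hch]
        congr 1
        omega
      calc q ^ (i+1).choose 2 * (s16C q N (i+1) + q ^ (N-i) * s16C q N i) * x ^ (i+1)
          = q ^ (i+1).choose 2 * s16C q N (i+1) * x ^ (i+1) +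
            (q ^ (i+1).choose 2 * q ^ (N-i)) * s16C q N i * x ^ (i+1) := by ring
        _ = _ := by rw [hexp]; ring
    rw [Finset.sum_range_succ' (fun j => q ^ j.choose 2 * s16C q (N+1) j * x ^ j) (N+1)]
    rw [Finset.sum_congr rfl key, Finset.sum_add_distrib, ← Finset.mul_sum]
    have h1 : ∑ i ∈ range (N+1), q ^ (i+1).choose 2 * s16C q N (i+1) * x ^ (i+1)
        = ∑ j ∈ range (N+2), q ^ j.choose 2 * s16C q N j * x ^ j
          - q ^ (0:ℕ).choose 2 * s16C q N 0 * x ^ 0 := by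
      rw [Finset.sum_range_succ' (fun j => q ^ j.choose 2 * s16C q N j * x ^ j) (N+1)]
      ring
    have h2 : ∑ j ∈ range (N+2), q ^ j.choose 2 * s16C q N j * x ^ j
        = ∑ j ∈ range (N+1), q ^ j.choose 2 * s16C q N j * x ^ j := by
      rw [Finset.sum_range_succ]
      have : s16C q N (N+1) = 0 := by rw [s16C, if_neg (by omega)]
      rw [this]; ring
    rw [h1, h2, s16C_zero q hq, s16C_zero q hq]
    ring

lemma s16_factor_ne' {q : ℂ} (hq : ‖q‖ < 1) (k : ℕ) : (1 : ℂ) + q * q ^ k ≠ 0 := by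
  intro h
  have h1 : ‖q * q ^ k‖ < 1 := by
    calc ‖q * q ^ k‖ = ‖q‖ * ‖q‖ ^ k := by rw [norm_mul, norm_pow]
      _ ≤ ‖q‖ * 1 := mul_le_mul_of_nonneg_left (pow_le_one₀ (norm_nonneg q) hq.le)
          (norm_nonneg q)
      _ < 1 := by simpa using hq
  have h2 : q * q ^ k = -1 := by linear_combination h
  rw [h2] at h1; simp at h1


lemma s16_multipliable' {q : ℂ} (hq : ‖q‖ < 1) (x : ℂ) :
    Multipliable (fun k : ℕ => 1 + x * q ^ k) := by
  have := s16_multipliable hq (-x)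
  simpa using this

theorem s16_euler {q : ℂ} (hq : ‖q‖ < 1) (x : ℂ) :
    HasSum (fun n : ℕ => q ^ n.choose 2 * x ^ n / qPoch q q n)
      (∏' k : ℕ, (1 + x * q ^ k)) := by
  set r := ‖q‖ with hr
  have h0 : 0 ≤ r := norm_nonneg q
  set c := s16c r with hc
  have hcpos : 0 < c := s16c_pos r
  set M := Real.exp ((1 - r)⁻¹) with hM
  have hMpos : 0 < M := Real.exp_pos _
  -- the infinite product (q;q)_∞
  have hm : Multipliable (fun k : ℕ => 1 - q * q ^ k) := s16_multipliable hq q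
  set Pinf := ∏' k : ℕ, (1 - q * q ^ k) with hPinf
  have htendP : Tendsto (fun N => qPoch q q N) atTop (𝓝 Pinf) :=
    hm.hasProd.tendsto_prod_nat
  have hPinf_norm : c ≤ ‖Pinf‖ :=
    ge_of_tendsto (htendP.norm) (Filter.Eventually.of_forall fun n => s16c_le_norm_qPoch hq n)
  have hPinf_ne : Pinf ≠ 0 := fun h => by
    rw [h, norm_zero] at hPinf_norm; linarith
  -- definitions
  set g : ℕ → ℂ := fun n => q ^ n.choose 2 * x ^ n / qPoch q q n with hg
  set f : ℕ → ℕ → ℂ := fun N j => if j ≤ N then q ^ j.choose 2 * s16C q N j * x ^ j else 0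
    with hf
  set bound : ℕ → ℝ := fun j => (M / (c * c)) * (r ^ j.choose 2 * ‖x‖ ^ j) with hbound
  have hbound_sum : Summable bound :=
    (s16_summable_ratio h0 hq (norm_nonneg x)).mul_left _
  -- norm bound on Gaussian binomials
  have hC : ∀ N j, ‖s16C q N j‖ ≤ M / (c * c) := by
    intro N j
    rw [s16C]
    split_ifs with h
    · rw [norm_div, norm_mul]
      apply div_le_div₀ (le_of_lt (by positivity)) (s16_norm_qPoch_le hq N)
        (by nlinarith [s16c_le_norm_qPoch hq j, s16c_le_norm_qPoch hq (N - j)])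
      exact mul_le_mul (s16c_le_norm_qPoch hq j) (s16c_le_norm_qPoch hq (N - j)) hcpos.le
        (norm_nonneg _)
    · rw [norm_zero]; positivity
  have hfb : ∀ N j, ‖f N j‖ ≤ bound j := by
    intro N j
    rw [hf]
    simp only []
    split_ifs with h
    · rw [norm_mul, norm_mul, norm_pow, norm_pow]
      rw [hbound]
      calc ‖q‖ ^ j.choose 2 * ‖s16C q N j‖ * ‖x‖ ^ j
          ≤ ‖q‖ ^ j.choose 2 * (M / (c * c)) * ‖x‖ ^ j := by
            apply mul_le_mul_of_nonneg_right _ (by positivity)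
            exact mul_le_mul_of_nonneg_left (hC N j) (by positivity)
        _ = (M / (c * c)) * (r ^ j.choose 2 * ‖x‖ ^ j) := by ring
    · rw [norm_zero]; positivity
  -- pointwise limits
  have htend : ∀ j, Tendsto (fun N => f N j) atTop (𝓝 (g j)) := by
    intro j
    have hev : ∀ᶠ N in atTop, f N j =
        q ^ j.choose 2 * (qPoch q q N / (qPoch q q j * qPoch q q (N - j))) * x ^ j := by
      filter_upwards [Filter.eventually_ge_atTop j] with N hN
      rw [hf]; simp only []
      rw [if_pos hN, s16C, if_pos hN]
    have h2 : Tendsto (fun N => qPoch q q (N - j)) atTop (𝓝 Pinf) :=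
      htendP.comp (tendsto_sub_atTop_nat j)
    have h3 : Tendsto (fun N =>
        q ^ j.choose 2 * (qPoch q q N / (qPoch q q j * qPoch q q (N - j))) * x ^ j) atTop
        (𝓝 (q ^ j.choose 2 * (Pinf / (qPoch q q j * Pinf)) * x ^ j)) := by
      apply Tendsto.mul_const
      apply Tendsto.const_mul
      exact htendP.div (tendsto_const_nhds.mul h2)
        (mul_ne_zero (qPoch_ne_zero hq j) hPinf_ne)
    have heq : q ^ j.choose 2 * (Pinf / (qPoch q q j * Pinf)) * x ^ j = g j := by
      rw [hg]
      field_simp [qPoch_ne_zero hq j, hPinf_ne]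
    rw [heq] at h3
    exact h3.congr' (hev.mono fun N h => h.symm)
  -- summability of g
  have hgs : Summable g := by
    apply Summable.of_norm_bounded (g := bound) hbound_sum
    intro j
    exact le_of_tendsto (htend j).norm (Filter.Eventually.of_forall fun N => hfb N j)
  -- Tannery
  have hT : Tendsto (fun N => ∑' j : ℕ, f N j) atTop (𝓝 (∑' j, g j)) :=
    tendsto_tsum_of_dominated_convergence hbound_sum htend
      (Filter.Eventually.of_forall fun N => hfb N)
  -- identify ∑' j, f N j with the partial product
  have hid : ∀ N, (∑' j : ℕ, f N j) = ∏ k ∈ range N, (1 + x * q ^ k) := by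
    intro N
    rw [s16_qbinom q hq x N]
    rw [tsum_eq_sum (s := range (N + 1))]
    · apply Finset.sum_congr rfl
      intro j hj
      rw [hf]; simp only []
      rw [if_pos (Nat.lt_succ_iff.1 (mem_range.1 hj))]
    · intro j hj
      rw [hf]; simp only []
      rw [if_neg (by simpa using fun h => hj (mem_range.2 (Nat.lt_succ_iff.2 h)))]
  have hT2 : Tendsto (fun N => ∏ k ∈ range N, (1 + x * q ^ k)) atTop
      (𝓝 (∏' k : ℕ, (1 + x * q ^ k))) :=
    (s16_multipliable' hq x).hasProd.tendsto_prod_nat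
  have : (∑' j, g j) = ∏' k : ℕ, (1 + x * q ^ k) :=
    tendsto_nhds_unique (hT.congr (fun N => hid N)) hT2
  exact this ▸ hgs.hasSum

-- exponent identity
lemma s16_exp_eq (i j : ℕ) :
    4 * i ^ 2 + 2 * i * j - 2 * i + j * (j + 1) / 2 =
      (4 * i ^ 2 - 2 * i) + (j.choose 2 + (2 * i + 1) * j) := by
  have h1 : i ≤ i ^ 2 := by nlinarith
  have h2 : j * (j + 1) / 2 = j.choose 2 + j := by
    have ha : (j + 1).choose 2 = j.choose 1 + j.choose 2 := Nat.choose_succ_succ j 1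
    have hb : (j + 1).choose 2 = (j + 1) * j / 2 := by
      rw [Nat.choose_two_right]; simp
    have hc : (j + 1) * j = j * (j + 1) := by ring
    rw [Nat.choose_one_right] at ha
    omega
  have h3 : (2 * i + 1) * j = 2 * (i * j) + j := by ring
  have h4 : 2 * i * j = 2 * (i * j) := by ring
  omega

lemma s16_exp_ge (i j : ℕ) :
    2 * i + j ≤ 4 * i ^ 2 + 2 * i * j - 2 * i + j * (j + 1) / 2 := by
  rw [s16_exp_eq i j]
  have h1 : i ≤ i ^ 2 := by nlinarith
  have h3 : (2 * i + 1) * j = 2 * (i * j) + j := by ring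
  omega

lemma s16_choose_two_mul (i : ℕ) : 2 * ((2 * i).choose 2) = 4 * i ^ 2 - 2 * i := by
  rw [Nat.choose_two_right]
  have h1 : 2 ∣ 2 * i * (2 * i - 1) := Dvd.dvd.mul_right (dvd_mul_right 2 i) _
  have h2 : 4 * i ^ 2 = 2 * i * (2 * i - 1) + 2 * i := by
    cases i with
    | zero => simp
    | succ m =>
      have h : 2 * (m + 1) - 1 = 2 * m + 1 := by omega
      rw [h]; ring
  omega

set_option maxHeartbeats 1600000 in
theorem stmt_16 (q : ℂ) (hq : ‖q‖ < 1) :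
    (∑' p : ℕ × ℕ,
        q ^ (4 * p.1 ^ 2 + 2 * p.1 * p.2 - 2 * p.1 + p.2 * (p.2 + 1) / 2) /
          (qPoch q q (2 * p.1) * qPoch q q p.2))
      = qPochInf (-q) q * qPochInf (-(q ^ 2)) (q ^ 2) := by
  have h0 : (0:ℝ) ≤ ‖q‖ := norm_nonneg q
  have hc := s16c_pos ‖q‖
  have hQ : ‖q ^ 2‖ < 1 := by rw [norm_pow]; nlinarith
  set g : ℕ × ℕ → ℂ := fun p =>
      q ^ (4 * p.1 ^ 2 + 2 * p.1 * p.2 - 2 * p.1 + p.2 * (p.2 + 1) / 2) /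
        (qPoch q q (2 * p.1) * qPoch q q p.2) with hgdef
  -- summability of the double series
  have hgsum : Summable g := by
    apply Summable.of_norm_bounded
      (g := fun p : ℕ × ℕ => (1 / (s16c ‖q‖ * s16c ‖q‖)) * ((‖q‖ ^ 2) ^ p.1 * ‖q‖ ^ p.2))
    · exact (Summable.mul_of_nonneg
        (summable_geometric_of_lt_one (by positivity) (by nlinarith))
        (summable_geometric_of_lt_one h0 hq)
        (fun i => by positivity) (fun j => by positivity)).mul_left _
    · rintro ⟨i, j⟩
      rw [hgdef]
      simp only []
      rw [norm_div, norm_pow, norm_mul]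
      have hnum : ‖q‖ ^ (4 * i ^ 2 + 2 * i * j - 2 * i + j * (j + 1) / 2) ≤
          (‖q‖ ^ 2) ^ i * ‖q‖ ^ j := by
        rw [← pow_mul, ← pow_add]
        exact pow_le_pow_of_le_one h0 hq.le (by have := s16_exp_ge i j; omega)
      have hden : s16c ‖q‖ * s16c ‖q‖ ≤ ‖qPoch q q (2 * i)‖ * ‖qPoch q q j‖ :=
        mul_le_mul (s16c_le_norm_qPoch hq _) (s16c_le_norm_qPoch hq _) hc.le (norm_nonneg _)
      calc ‖q‖ ^ (4 * i ^ 2 + 2 * i * j - 2 * i + j * (j + 1) / 2) /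
            (‖qPoch q q (2 * i)‖ * ‖qPoch q q j‖)
          ≤ ((‖q‖ ^ 2) ^ i * ‖q‖ ^ j) / (s16c ‖q‖ * s16c ‖q‖) :=
            div_le_div₀ (by positivity) hnum (by positivity) hden
        _ = (1 / (s16c ‖q‖ * s16c ‖q‖)) * ((‖q‖ ^ 2) ^ i * ‖q‖ ^ j) := by ring
  -- termwise factorization
  have hterm : ∀ i j : ℕ, g (i, j) =
      (q ^ (4 * i ^ 2 - 2 * i) / qPoch q q (2 * i)) *
        (q ^ j.choose 2 * (q ^ (2 * i + 1)) ^ j / qPoch q q j) := by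
    intro i j
    rw [hgdef]
    simp only []
    rw [← pow_mul q (2 * i + 1) j, s16_exp_eq i j, pow_add, pow_add]
    rw [div_mul_div_comm]
  -- Fubini
  have hfub : (∑' p : ℕ × ℕ, g p) = ∑' i : ℕ, ∑' j : ℕ, g (i, j) := by
    apply Summable.tsum_prod' hgsum
    intro i
    apply Summable.congr
      (f := fun j => (q ^ (4 * i ^ 2 - 2 * i) / qPoch q q (2 * i)) *
        (q ^ j.choose 2 * (q ^ (2 * i + 1)) ^ j / qPoch q q j))
    · exact (s16_euler hq (q ^ (2 * i + 1))).summable.mul_left _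
    · intro j; exact (hterm i j).symm
  -- evaluate the inner sums via Euler's identity
  have hinner : ∀ i : ℕ, (∑' j : ℕ, g (i, j)) =
      (q ^ (4 * i ^ 2 - 2 * i) / qPoch q q (2 * i)) *
        ∏' k : ℕ, (1 + q ^ (2 * i + 1) * q ^ k) := by
    intro i
    rw [tsum_congr (fun j => hterm i j), tsum_mul_left,
      (s16_euler hq (q ^ (2 * i + 1))).tsum_eq]
  have hmq : Multipliable (fun k : ℕ => 1 + q * q ^ k) := s16_multipliable' hq q
  have hAeq : qPochInf (-q) q = ∏' k : ℕ, (1 + q * q ^ k) := by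
    rw [qPochInf]; exact tprod_congr fun k => by ring
  have hBne : ∀ i : ℕ, (∏ k ∈ range (2 * i), (1 + q * q ^ k)) ≠ 0 := fun i =>
    Finset.prod_ne_zero_iff.2 fun k _ => s16_factor_ne' hq k
  have htail : ∀ i : ℕ, (∏' k : ℕ, (1 + q ^ (2 * i + 1) * q ^ k)) =
      qPochInf (-q) q / ∏ k ∈ range (2 * i), (1 + q * q ^ k) := by
    intro i
    have hmt : Multipliable (fun k : ℕ => 1 + q * q ^ (k + 2 * i)) :=
      (s16_multipliable' hq (q ^ (2 * i + 1))).congr (fun k => by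
        congr 1
        rw [← pow_add, ← pow_succ']
        congr 1
        omega)
    have h1 := Multipliable.prod_mul_tprod_nat_mul' (f := fun k => 1 + q * q ^ k) (k := 2 * i) hmt
    have h2 : (∏' k : ℕ, (1 + q ^ (2 * i + 1) * q ^ k)) =
        ∏' k : ℕ, (1 + q * q ^ (k + 2 * i)) :=
      tprod_congr fun k => by
        congr 1
        rw [← pow_add, ← pow_succ']
        congr 1
        omega
    rw [h2, eq_div_iff (hBne i), hAeq, mul_comm]
    exact h1
  have hPB : ∀ i : ℕ, qPoch q q (2 * i) * ∏ k ∈ range (2 * i), (1 + q * q ^ k) =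
      qPoch (q ^ 2) (q ^ 2) (2 * i) := by
    intro i
    rw [qPoch, qPoch, ← Finset.prod_mul_distrib]
    exact Finset.prod_congr rfl fun k _ => by ring
  have hstep : ∀ i : ℕ, (∑' j : ℕ, g (i, j)) =
      qPochInf (-q) q *
        (q ^ (4 * i ^ 2 - 2 * i) / qPoch (q ^ 2) (q ^ 2) (2 * i)) := by
    intro i
    rw [hinner i, htail i, ← hPB i, div_mul_div_comm]
    ring
  rw [hfub, tsum_congr hstep, tsum_mul_left]
  congr 1
  -- final evaluation: the even part of Euler's series at x = 1, base q²
  set Q : ℂ := q ^ 2 with hQdef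
  set E2 : ℕ → ℂ := fun n => Q ^ n.choose 2 * (1:ℂ) ^ n / qPoch Q Q n with hE2def
  set O2 : ℕ → ℂ := fun n => Q ^ n.choose 2 * (-1:ℂ) ^ n / qPoch Q Q n with hO2def
  have hE2 : HasSum E2 (∏' k : ℕ, (1 + 1 * Q ^ k)) := s16_euler hQ 1
  have hO2 : HasSum O2 (∏' k : ℕ, (1 + (-1) * Q ^ k)) := s16_euler hQ (-1)
  have hOzero : (∏' k : ℕ, (1 + (-1:ℂ) * Q ^ k)) = 0 := by
    apply HasProd.tprod_eq
    exact s16_hasProd_zero (k₀ := 0) (by norm_num)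
  have hEprod : (∏' k : ℕ, (1 + 1 * Q ^ k)) = 2 * qPochInf (-Q) Q := by
    have hm1 : Multipliable (fun k : ℕ => 1 + 1 * Q ^ (k + 1)) :=
      (s16_multipliable' hQ Q).congr (fun k => by rw [pow_succ']; ring)
    rw [tprod_eq_zero_mul' hm1]
    congr 1
    · norm_num
    · rw [qPochInf]
      exact tprod_congr fun k => by rw [pow_succ']; ring
  have hinj2 : Function.Injective (fun k : ℕ => 2 * k) := fun a b h => by
    simp only [] at h; omega
  have hinj2' : Function.Injective (fun k : ℕ => 2 * k + 1) := fun a b h => by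
    simp only [] at h; omega
  have hse : Summable (fun k => E2 (2 * k)) := hE2.summable.comp_injective hinj2
  have hso : Summable (fun k => E2 (2 * k + 1)) := hE2.summable.comp_injective hinj2'
  have hse' : Summable (fun k => O2 (2 * k)) := hO2.summable.comp_injective hinj2
  have hso' : Summable (fun k => O2 (2 * k + 1)) := hO2.summable.comp_injective hinj2'
  have heo : (∑' k, E2 (2 * k)) + ∑' k, E2 (2 * k + 1) = 2 * qPochInf (-Q) Q := by
    rw [tsum_even_add_odd hse hso, hE2.tsum_eq, hEprod]
  have heo' : (∑' k, E2 (2 * k)) - ∑' k, E2 (2 * k + 1) = 0 := by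
    have e1 : ∀ k, O2 (2 * k) = E2 (2 * k) := fun k => by
      rw [hO2def, hE2def]; simp [pow_mul]
    have e2 : ∀ k, O2 (2 * k + 1) = -E2 (2 * k + 1) := fun k => by
      rw [hO2def, hE2def]
      simp only []
      rw [pow_succ, pow_mul]
      norm_num
      ring
    have := tsum_even_add_odd hse' hso'
    rw [hO2.tsum_eq, hOzero] at this
    rw [tsum_congr e1, tsum_congr e2, tsum_neg] at this
    linear_combination this
  have hkey : (∑' k, E2 (2 * k)) = qPochInf (-Q) Q := by
    have h2 : (2:ℂ) * (∑' k, E2 (2 * k)) = 2 * qPochInf (-Q) Q := by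
      linear_combination heo + heo'
    exact mul_left_cancel₀ two_ne_zero h2
  rw [← hkey]
  apply tsum_congr
  intro i
  rw [hE2def]
  simp only []
  rw [one_pow, mul_one]
  congr 1
  rw [hQdef, ← pow_mul]
  congr 1
  have := s16_choose_two_mul i
  omega
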